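/- Let 𝐗 and 𝐘 be distributions of mm-spaces with embeddings (X,(ψ^X_i)_{i∈[k_X]}) and (Y,(ψ^Y_j)_{j∈[k_Y]}), let p ∈ [1,∞), and let μ ∈ M(μ_X, μ_Y) be a coupling with ∬_{(X×Y)×(X×Y)} Γ*_p(x,y,x',y') dμ(x,y) dμ(x',y') = 0. Then for every i ∈ [k_X], j ∈ [k_Y] and every two points (x₁,y₁), (x₂,y₂) in the support of μ with x₁, x₂ ∈ ψ^X_i(X_i) and y₁, y₂ ∈ ψ^Y_j(Y_j), one has d_X(x₁,x₂) = d_Y(y₁,y₂). -/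

import Mathlib

/-- A metric measure space: a compact metric space equipped with a Borel
probability measure of full support. -/
structure MMSpace where
  carrier : Type
  [met : MetricSpace carrier]
  [cpt : CompactSpace carrier]
  [mble : MeasurableSpace carrier]
  [borel : BorelSpace carrier]
  μ : MeasureTheory.Measure carrier
  [prob : MeasureTheory.IsProbabilityMeasure μ]
  fullSupp : μ.IsOpenPosMeasure

attribute [instance] MMSpace.met MMSpace.cpt MMSpace.mble MMSpace.borel MMSpace.prob

/-- A distribution of mm-spaces: finitely many mm-spaces (clusters) with
strictly positive weights summing to one. -/
structure MMDist where
  k : ℕ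
  space : Fin k → MMSpace
  s : Fin k → ℝ
  s_pos : ∀ i, 0 < s i
  s_sum : ∑ i, s i = 1

/-- An embedding of a distribution of mm-spaces: an mm-space together with
isometric embedding functions whose weighted pushforwards recover the measure,
with pairwise disjoint images covering the space. -/
structure MMEmbedding (D : MMDist) where
  tot : MMSpace
  ψ : ∀ i, (D.space i).carrier → tot.carrier
  isom : ∀ i, Isometry (ψ i)
  pushforward :
    ∑ i, ENNReal.ofReal (D.s i) • MeasureTheory.Measure.map (ψ i) (D.space i).μ = tot.μ
  disj : ∀ i j, i ≠ j → Disjoint (Set.range (ψ i)) (Set.range (ψ j))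
  cover : ⋃ i, Set.range (ψ i) = Set.univ

open MeasureTheory

/-- The set of couplings `M(μX, μY)`: Borel probability measures on the product
with the prescribed marginals. -/
def Couplings {X Y : Type} [MeasurableSpace X] [MeasurableSpace Y]
    (μX : Measure X) (μY : Measure Y) : Set (Measure (X × Y)) :=
  {μ | IsProbabilityMeasure μ ∧ μ.map Prod.fst = μX ∧ μ.map Prod.snd = μY}

/-- The Gromov-Wasserstein objective `GW_{Γ,p}` for a loss `Γ`. -/
noncomputable def GWobj {X Y : Type} [MeasurableSpace X] [MeasurableSpace Y]
    (μX : Measure X) (μY : Measure Y) (Γ : X → Y → X → Y → ℝ) (p : ℝ) : ℝ :=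
  sInf ((fun μ : Measure (X × Y) =>
      (1 / 2) * (∫ w : (X × Y) × (X × Y), Γ w.1.1 w.1.2 w.2.1 w.2.2 ∂(μ.prod μ)) ^ (1 / p))
    '' Couplings μX μY)

open scoped Classical in
/-- The loss `Γ*_p` associated to embeddings of two distributions of mm-spaces. -/
noncomputable def GammaStar {DX DY : MMDist} (EX : MMEmbedding DX) (EY : MMEmbedding DY)
    (p : ℝ) (x : EX.tot.carrier) (y : EY.tot.carrier)
    (x' : EX.tot.carrier) (y' : EY.tot.carrier) : ℝ :=
  if (∃ i, x ∈ Set.range (EX.ψ i) ∧ x' ∈ Set.range (EX.ψ i)) ∧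
      (∃ j, y ∈ Set.range (EY.ψ j) ∧ y' ∈ Set.range (EY.ψ j)) then
    |dist x x' - dist y y'| ^ p
  else 0

/-- The joint Gromov-Wasserstein objective computed with given embeddings. -/
noncomputable def JGWwith {DX DY : MMDist} (EX : MMEmbedding DX) (EY : MMEmbedding DY)
    (p : ℝ) : ℝ :=
  GWobj EX.tot.μ EY.tot.μ (GammaStar EX EY p) p

/-- The (topological) support of a measure: points all of whose open
neighbourhoods have positive measure. -/
def measureSupport {α : Type} [TopologicalSpace α] [MeasurableSpace α]
    (μ : Measure α) : Set α :=
  {x | ∀ U : Set α, IsOpen U → x ∈ U → 0 < μ U}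

/-- If a coupling `μ ∈ M(μ_X, μ_Y)` has vanishing double
integral of `Γ*_p`, then any two points of its support lying over the same pair
of clusters `(i, j)` are matched isometrically: `d_X(x₁,x₂) = d_Y(y₁,y₂)`. -/
theorem support_of_null_coupling_isometric (DX DY : MMDist)
    (EX : MMEmbedding DX) (EY : MMEmbedding DY) (p : ℝ) (hp : 1 ≤ p)
    (μ : Measure (EX.tot.carrier × EY.tot.carrier))
    (hμ : μ ∈ Couplings EX.tot.μ EY.tot.μ)
    (hzero : (∫ w : (EX.tot.carrier × EY.tot.carrier) ×
        (EX.tot.carrier × EY.tot.carrier),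
      GammaStar EX EY p w.1.1 w.1.2 w.2.1 w.2.2 ∂(μ.prod μ)) = 0)
    (i : Fin DX.k) (j : Fin DY.k)
    (x₁ x₂ : EX.tot.carrier) (y₁ y₂ : EY.tot.carrier)
    (h₁ : (x₁, y₁) ∈ measureSupport μ) (h₂ : (x₂, y₂) ∈ measureSupport μ)
    (hx₁ : x₁ ∈ Set.range (EX.ψ i)) (hx₂ : x₂ ∈ Set.range (EX.ψ i))
    (hy₁ : y₁ ∈ Set.range (EY.ψ j)) (hy₂ : y₂ ∈ Set.range (EY.ψ j)) :
    dist x₁ x₂ = dist y₁ y₂ := by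
  classical
  by_contra hne
  obtain ⟨hprob, hfst, hsnd⟩ := hμ
  haveI := hprob
  set ε := |dist x₁ x₂ - dist y₁ y₂| with hεdef
  have hεpos : 0 < ε := abs_pos.mpr (sub_ne_zero.mpr hne)
  have hp0 : 0 < p := lt_of_lt_of_le one_pos hp
  have hclX : ∀ i', IsClosed (Set.range (EX.ψ i')) := fun i' => by
    rw [← Set.image_univ]
    exact (isCompact_univ.image (EX.isom i').continuous).isClosed
  have hclY : ∀ j', IsClosed (Set.range (EY.ψ j')) := fun j' => by
    rw [← Set.image_univ]
    exact (isCompact_univ.image (EY.isom j').continuous).isClosed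
  set δ := ε / 8 with hδdef
  have hδpos : 0 < δ := by positivity
  -- the union of the other clusters is closed
  set CX : Set EX.tot.carrier := ⋃ i' : {i' : Fin DX.k // i' ≠ i}, Set.range (EX.ψ i'.1) with hCX
  set CY : Set EY.tot.carrier := ⋃ j' : {j' : Fin DY.k // j' ≠ j}, Set.range (EY.ψ j'.1) with hCY
  have hCXcl : IsClosed CX := isClosed_iUnion_of_finite fun i' => hclX i'.1
  have hCYcl : IsClosed CY := isClosed_iUnion_of_finite fun j' => hclY j'.1
  set U : EX.tot.carrier → Set EX.tot.carrier := fun x => Metric.ball x δ \ CX with hU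
  set V : EY.tot.carrier → Set EY.tot.carrier := fun y => Metric.ball y δ \ CY with hV
  have hUopen : ∀ x, IsOpen (U x) := fun x => Metric.isOpen_ball.sdiff hCXcl
  have hVopen : ∀ y, IsOpen (V y) := fun y => Metric.isOpen_ball.sdiff hCYcl
  have hUmem : ∀ x, x ∈ Set.range (EX.ψ i) → x ∈ U x := by
    intro x hx
    refine ⟨Metric.mem_ball_self hδpos, ?_⟩
    intro hxC
    obtain ⟨t, ht⟩ := Set.mem_iUnion.mp hxC
    exact Set.disjoint_left.mp (EX.disj i t.1 (Ne.symm t.2)) hx ht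
  have hVmem : ∀ y, y ∈ Set.range (EY.ψ j) → y ∈ V y := by
    intro y hy
    refine ⟨Metric.mem_ball_self hδpos, ?_⟩
    intro hyC
    obtain ⟨t, ht⟩ := Set.mem_iUnion.mp hyC
    exact Set.disjoint_left.mp (EY.disj j t.1 (Ne.symm t.2)) hy ht
  have hUsub : ∀ x z, z ∈ U x → z ∈ Set.range (EX.ψ i) := by
    intro x z hz
    have hzuniv : z ∈ ⋃ i', Set.range (EX.ψ i') := by rw [EX.cover]; trivial
    obtain ⟨i'', hi''⟩ := Set.mem_iUnion.mp hzuniv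
    by_cases h : i'' = i
    · exact h ▸ hi''
    · exact absurd (Set.mem_iUnion.mpr ⟨⟨i'', h⟩, hi''⟩) hz.2
  have hVsub : ∀ y z, z ∈ V y → z ∈ Set.range (EY.ψ j) := by
    intro y z hz
    have hzuniv : z ∈ ⋃ j', Set.range (EY.ψ j') := by rw [EY.cover]; trivial
    obtain ⟨j'', hj''⟩ := Set.mem_iUnion.mp hzuniv
    by_cases h : j'' = j
    · exact h ▸ hj''
    · exact absurd (Set.mem_iUnion.mpr ⟨⟨j'', h⟩, hj''⟩) hz.2
  -- the integrand
  set f : (EX.tot.carrier × EY.tot.carrier) × (EX.tot.carrier × EY.tot.carrier) → ℝ :=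
    fun w => GammaStar EX EY p w.1.1 w.1.2 w.2.1 w.2.2 with hf
  set g : (EX.tot.carrier × EY.tot.carrier) × (EX.tot.carrier × EY.tot.carrier) → ℝ :=
    fun w => |dist w.1.1 w.2.1 - dist w.1.2 w.2.2| ^ p with hg
  set S : Set ((EX.tot.carrier × EY.tot.carrier) × (EX.tot.carrier × EY.tot.carrier)) :=
    {w | (∃ i', w.1.1 ∈ Set.range (EX.ψ i') ∧ w.2.1 ∈ Set.range (EX.ψ i')) ∧
      (∃ j', w.1.2 ∈ Set.range (EY.ψ j') ∧ w.2.2 ∈ Set.range (EY.ψ j'))} with hS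
  have hfind : f = S.indicator g := by
    funext w
    simp only [hf, hS, hg, GammaStar, Set.indicator_apply, Set.mem_setOf_eq]
  have hgcont : Continuous g := by
    rw [hg]
    exact (Real.continuous_rpow_const hp0.le).comp
      (((continuous_fst.fst.dist continuous_snd.fst).sub
        (continuous_fst.snd.dist continuous_snd.snd)).abs)
  have hgmeas : Measurable g := hgcont.measurable
  have hSmeas : MeasurableSet S := by
    have hSeq : S =
        (⋃ i', {w : (EX.tot.carrier × EY.tot.carrier) × (EX.tot.carrier × EY.tot.carrier) |
            w.1.1 ∈ Set.range (EX.ψ i')} ∩ {w | w.2.1 ∈ Set.range (EX.ψ i')}) ∩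
        (⋃ j', {w : (EX.tot.carrier × EY.tot.carrier) × (EX.tot.carrier × EY.tot.carrier) |
            w.1.2 ∈ Set.range (EY.ψ j')} ∩ {w | w.2.2 ∈ Set.range (EY.ψ j')}) := by
      ext w
      simp only [hS, Set.mem_setOf_eq, Set.mem_inter_iff, Set.mem_iUnion]
    rw [hSeq]
    refine MeasurableSet.inter ?_ ?_
    · exact MeasurableSet.iUnion fun i' =>
        (measurable_fst.fst (hclX i').measurableSet).inter
          (measurable_snd.fst (hclX i').measurableSet)
    · exact MeasurableSet.iUnion fun j' =>
        (measurable_fst.snd (hclY j').measurableSet).inter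
          (measurable_snd.snd (hclY j').measurableSet)
  have hfmeas : Measurable f := hfind ▸ hgmeas.indicator hSmeas
  have hfnonneg : ∀ w, 0 ≤ f w := by
    intro w
    rw [hfind]
    apply Set.indicator_nonneg
    intro w' _
    exact Real.rpow_nonneg (abs_nonneg _) p
  -- boundedness
  set C : ℝ := (Metric.diam (Set.univ : Set EX.tot.carrier) + Metric.diam (Set.univ : Set EY.tot.carrier)) ^ p with hC
  have hCnn : 0 ≤ Metric.diam (Set.univ : Set EX.tot.carrier) + Metric.diam (Set.univ : Set EY.tot.carrier) :=
    add_nonneg Metric.diam_nonneg Metric.diam_nonneg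
  have hfbdd : ∀ w, ‖f w‖ ≤ C := by
    intro w
    rw [Real.norm_of_nonneg (hfnonneg w), hfind]
    rcases Set.indicator_eq_zero_or_self S g w with h | h
    · rw [h]; exact Real.rpow_nonneg hCnn p
    · rw [h, hg, hC]
      apply Real.rpow_le_rpow (abs_nonneg _) _ hp0.le
      calc |dist w.1.1 w.2.1 - dist w.1.2 w.2.2|
          ≤ |dist w.1.1 w.2.1| + |dist w.1.2 w.2.2| := abs_sub _ _
        _ = dist w.1.1 w.2.1 + dist w.1.2 w.2.2 := by
            rw [abs_of_nonneg dist_nonneg, abs_of_nonneg dist_nonneg]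
        _ ≤ _ := add_le_add
            (Metric.dist_le_diam_of_mem isCompact_univ.isBounded trivial trivial)
            (Metric.dist_le_diam_of_mem isCompact_univ.isBounded trivial trivial)
  have hint : Integrable f (μ.prod μ) :=
    ⟨hfmeas.aestronglyMeasurable,
      MeasureTheory.HasFiniteIntegral.of_bounded (C := C)
        (Filter.Eventually.of_forall hfbdd)⟩
  -- the product neighborhood
  set s : Set ((EX.tot.carrier × EY.tot.carrier) × (EX.tot.carrier × EY.tot.carrier)) := (U x₁ ×ˢ V y₁) ×ˢ (U x₂ ×ˢ V y₂) with hs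
  have hsmeas : MeasurableSet s :=
    (((hUopen x₁).prod (hVopen y₁)).measurableSet).prod
      (((hUopen x₂).prod (hVopen y₂)).measurableSet)
  have hν1 : 0 < μ (U x₁ ×ˢ V y₁) :=
    h₁ _ ((hUopen x₁).prod (hVopen y₁)) ⟨hUmem x₁ hx₁, hVmem y₁ hy₁⟩
  have hν2 : 0 < μ (U x₂ ×ˢ V y₂) :=
    h₂ _ ((hUopen x₂).prod (hVopen y₂)) ⟨hUmem x₂ hx₂, hVmem y₂ hy₂⟩
  have hνs : 0 < (μ.prod μ) s := by
    rw [hs, MeasureTheory.Measure.prod_prod]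
    exact ENNReal.mul_pos hν1.ne' hν2.ne'
  -- lower bound on the integrand on s
  have hlb : ∀ w ∈ s, (ε / 2) ^ p ≤ f w := by
    rintro ⟨⟨x, y⟩, ⟨x', y'⟩⟩ ⟨⟨hxU, hyV⟩, ⟨hx'U, hy'V⟩⟩
    have hcond : ((⟨x, y⟩, ⟨x', y'⟩) : (EX.tot.carrier × EY.tot.carrier) × (EX.tot.carrier × EY.tot.carrier)) ∈ S :=
      ⟨⟨i, hUsub x₁ x hxU, hUsub x₂ x' hx'U⟩, ⟨j, hVsub y₁ y hyV, hVsub y₂ y' hy'V⟩⟩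
    have hfw : f (⟨x, y⟩, ⟨x', y'⟩) = |dist x x' - dist y y'| ^ p := by
      rw [hfind, Set.indicator_of_mem hcond]
    rw [hfw]
    apply Real.rpow_le_rpow (by positivity) _ hp0.le
    have hdx : |dist x x' - dist x₁ x₂| < 2 * δ := by
      have := dist_dist_dist_le x x' x₁ x₂
      rw [Real.dist_eq] at this
      have h1 : dist x x₁ < δ := hxU.1
      have h2 : dist x' x₂ < δ := hx'U.1
      linarith
    have hdy : |dist y y' - dist y₁ y₂| < 2 * δ := by
      have := dist_dist_dist_le y y' y₁ y₂
      rw [Real.dist_eq] at this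
      have h1 : dist y y₁ < δ := hyV.1
      have h2 : dist y' y₂ < δ := hy'V.1
      linarith
    have ht1 : |dist x₁ x₂ - dist y₁ y₂| ≤
        |dist x₁ x₂ - dist x x'| + |dist x x' - dist y₁ y₂| := abs_sub_le _ _ _
    have ht2 : |dist x x' - dist y₁ y₂| ≤
        |dist x x' - dist y y'| + |dist y y' - dist y₁ y₂| := abs_sub_le _ _ _
    have hcomm : |dist x₁ x₂ - dist x x'| = |dist x x' - dist x₁ x₂| := abs_sub_comm _ _
    have hε8 : ε = 8 * δ := by rw [hδdef]; ring
    rw [← hεdef] at ht1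
    linarith
  -- conclude
  have h2 : (ε / 2) ^ p * ((μ.prod μ) s).toReal ≤ ∫ w in s, f w ∂(μ.prod μ) :=
    by have := MeasureTheory.setIntegral_ge_of_const_le hsmeas (measure_ne_top _ _) hlb
         hint.integrableOn
       rw [smul_eq_mul, mul_comm] at this; exact this
  have h1 : ∫ w in s, f w ∂(μ.prod μ) ≤ ∫ w, f w ∂(μ.prod μ) :=
    MeasureTheory.setIntegral_le_integral hint (Filter.Eventually.of_forall hfnonneg)
  have hpos : 0 < (ε / 2) ^ p * ((μ.prod μ) s).toReal := by
    apply mul_pos (Real.rpow_pos_of_pos (by positivity) p)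
    exact ENNReal.toReal_pos hνs.ne' (measure_ne_top _ _)
  have : (∫ w, f w ∂(μ.prod μ)) = 0 := hzero
  linarith
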